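/- Divided difference operators act on Schubert classes by: if λ_i > λ_{i+1} (so s_i·λ < λ), then ∂_i S̃_λ = S̃_{s_i·λ}; if λ_i ≤ λ_{i+1}, then ∂_i S̃_λ = 0. -/

import Mathlib

def ones (n : ℕ) (l : Fin n → Bool) : ℕ :=
  (Finset.univ.filter (fun i => l i = true)).card

def invCount (n : ℕ) (l : Fin n → Bool) : ℕ :=
  (Finset.univ.filter (fun p : Fin n × Fin n =>
    p.1 < p.2 ∧ l p.1 = true ∧ l p.2 = false)).card

def psum (n : ℕ) (l : Fin n → Bool) (j : ℕ) : ℕ :=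
  (Finset.univ.filter (fun i : Fin n => i.val < j ∧ l i = true)).card

/-- dominance order: `domLE n l l'` means `l ≤ l'`. -/
def domLE (n : ℕ) (l l' : Fin n → Bool) : Prop :=
  ∀ j : ℕ, psum n l j ≤ psum n l' j

/-- the identity string `0^{n-k} 1^k`. -/
def idStr (n k : ℕ) : Fin n → Bool := fun i => decide (n - k ≤ i.val)

/-- the divisor string `0^{n-k-1} 1 0 1^{k-1}`. -/
def dvStr (n k : ℕ) : Fin n → Bool :=
  fun i => decide (i.val = n - k - 1 ∨ n - k + 1 ≤ i.val)

open MvPolynomial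

noncomputable def invProd (n : ℕ) (l : Fin n → Bool) : MvPolynomial (Fin n) ℤ :=
  ∏ p ∈ Finset.univ.filter (fun p : Fin n × Fin n =>
      p.1 < p.2 ∧ l p.1 = true ∧ l p.2 = false), (X p.2 - X p.1)

/-- the GKM condition for a tuple of polynomials indexed by binary strings
(imposed on the strings with `k` ones). -/
def IsGKM (n k : ℕ) (α : (Fin n → Bool) → MvPolynomial (Fin n) ℤ) : Prop :=
  ∀ l : Fin n → Bool, ones n l = k → ∀ i j : Fin n,
    (X i - X j : MvPolynomial (Fin n) ℤ) ∣ (α l - α (l ∘ Equiv.swap i j))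

/-- `α` is supported above `l` in dominance order. -/
def SuppAbove (n k : ℕ) (α : (Fin n → Bool) → MvPolynomial (Fin n) ℤ)
    (l : Fin n → Bool) : Prop :=
  ∀ m : Fin n → Bool, ones n m = k → α m ≠ 0 → domLE n l m

/-- `S` is a family of equivariant Schubert classes. -/
def IsSchubertFamily (n k : ℕ)
    (S : (Fin n → Bool) → (Fin n → Bool) → MvPolynomial (Fin n) ℤ) : Prop :=
  ∀ l : Fin n → Bool, ones n l = k →
    IsGKM n k (S l) ∧ SuppAbove n k (S l) l ∧ S l l = invProd n l ∧
    ∀ m : Fin n → Bool, (S l m).IsHomogeneous (invCount n l)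

instance (n k : ℕ) : DecidablePred (fun l : Fin n → Bool => ones n l = k) :=
  fun _ => Nat.decEq _ _

/-- the action `(sᵢ·α)_μ = sᵢ·(α_{sᵢμ})` of the simple transposition
`sᵢ = (i ↔ i+1)` on tuples, permuting positions and variables. -/
noncomputable def sAct (n : ℕ) (i : ℕ) (h : i + 1 < n)
    (α : (Fin n → Bool) → MvPolynomial (Fin n) ℤ) :
    (Fin n → Bool) → MvPolynomial (Fin n) ℤ :=
  fun m => rename (⇑(Equiv.swap (⟨i, by omega⟩ : Fin n) ⟨i + 1, h⟩))
    (α (m ∘ ⇑(Equiv.swap (⟨i, by omega⟩ : Fin n) ⟨i + 1, h⟩)))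


/- ========= helper lemmas ========= -/

open Finset

section Helpers

variable {n : ℕ}

/- ---- polynomial algebra ---- -/

lemma dvd_sub_aeval (a b : Fin n)
    (g : Fin n → MvPolynomial (Fin n) ℤ)
    (hX : ∀ t, (X a - X b : MvPolynomial (Fin n) ℤ) ∣ (X t - g t)) (f : MvPolynomial (Fin n) ℤ) :
    (X a - X b : MvPolynomial (Fin n) ℤ) ∣ f - aeval g f := by
  induction f using MvPolynomial.induction_on with
  | C c => simp
  | add f g hf hg =>
    have := dvd_add hf hg
    rw [map_add]
    convert this using 1
    ring
  | mul_X f t hf =>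
    rw [map_mul, aeval_X]
    have h1 : f * X t - aeval g f * g t
        = f * (X t - g t) + (f - aeval g f) * g t := by ring
    rw [h1]
    exact dvd_add (Dvd.dvd.mul_left (hX t) f) (Dvd.dvd.mul_right hf _)

lemma dvd_sub_rename_swap (a b : Fin n) (f : MvPolynomial (Fin n) ℤ) :
    (X a - X b : MvPolynomial (Fin n) ℤ) ∣ f - rename (⇑(Equiv.swap a b)) f := by
  have hr : rename (⇑(Equiv.swap a b)) f = aeval (fun t => X (Equiv.swap a b t)) f := by
    induction f using MvPolynomial.induction_on <;> simp_all
  rw [hr]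
  apply dvd_sub_aeval
  intro t
  rcases eq_or_ne t a with rfl | hta
  · rw [Equiv.swap_apply_left]
  rcases eq_or_ne t b with rfl | htb
  · rw [Equiv.swap_apply_right]
    exact ⟨-1, by ring⟩
  · rw [Equiv.swap_apply_of_ne_of_ne hta htb, sub_self]
    exact dvd_zero _

lemma rename_dvd {f g : MvPolynomial (Fin n) ℤ} (τ : Fin n → Fin n) (hfg : f ∣ g) :
    rename τ f ∣ rename τ g := by
  obtain ⟨u, hu⟩ := hfg
  exact ⟨rename τ u, by rw [hu, map_mul]⟩

lemma X_sub_X_ne_zero {a b : Fin n} (hab : a ≠ b) :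
    (X a - X b : MvPolynomial (Fin n) ℤ) ≠ 0 := by
  intro hh
  have := congrArg (eval (fun t => if t = a then (1:ℤ) else 0)) hh
  simp [eval_X, hab.symm] at this

lemma prime_X_sub_X {a b : Fin n} (hab : a ≠ b) :
    Prime (X a - X b : MvPolynomial (Fin n) ℤ) := by
  have hφab : aeval (fun t => if t = a then (X b : MvPolynomial (Fin n) ℤ) else X t)
      (X a - X b : MvPolynomial (Fin n) ℤ) = 0 := by
    simp [aeval_X, hab.symm]
  have key : ∀ f : MvPolynomial (Fin n) ℤ, (X a - X b : MvPolynomial (Fin n) ℤ) ∣ f ↔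
      aeval (fun t => if t = a then (X b : MvPolynomial (Fin n) ℤ) else X t) f = 0 := by
    intro f
    constructor
    · rintro ⟨g, rfl⟩
      rw [map_mul, hφab, zero_mul]
    · intro h0
      have hd := dvd_sub_aeval a b
        (fun t => if t = a then (X b : MvPolynomial (Fin n) ℤ) else X t) ?_ f
      · rw [h0, sub_zero] at hd
        exact hd
      · intro t
        rcases eq_or_ne t a with rfl | hta
        · simp only [if_pos rfl]
          exact dvd_refl _
        · simp [if_neg hta]
  constructor
  · exact X_sub_X_ne_zero hab
  constructor
  · intro hu
    have : (X a - X b : MvPolynomial (Fin n) ℤ) ∣ 1 := hu.dvd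
    rw [key] at this
    simp at this
  · intro f g hfg
    rw [key] at hfg ⊢
    rw [key g]
    rw [map_mul] at hfg
    exact mul_eq_zero.mp hfg

lemma not_dvd_X_sub_X {a b c d : Fin n} (w : Fin n) (hw : w = c ∨ w = d)
    (hwa : w ≠ a) (hwb : w ≠ b) (hcd : c ≠ d) :
    ¬ ((X a - X b : MvPolynomial (Fin n) ℤ) ∣ (X c - X d)) := by
  rintro ⟨g, hg⟩
  have := congrArg (eval (fun t => if t = w then (1:ℤ) else 0)) hg
  rw [map_sub, map_mul, map_sub] at this
  simp only [eval_X] at this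
  rcases hw with rfl | rfl
  · simp [Ne.symm hwa, Ne.symm hwb, Ne.symm hcd] at this
  · simp [Ne.symm hwa, Ne.symm hwb, hcd] at this

lemma prod_primes_dvd' {R : Type*} [CommRing R] [IsDomain R] {ι : Type*} [DecidableEq ι]
    (s : Finset ι) (f : ι → R) (A : R)
    (hp : ∀ p ∈ s, Prime (f p)) (hnd : ∀ p ∈ s, ∀ q ∈ s, p ≠ q → ¬ f p ∣ f q)
    (hd : ∀ p ∈ s, f p ∣ A) : (∏ p ∈ s, f p) ∣ A := by
  induction s using Finset.induction_on generalizing A with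
  | empty => simp
  | @insert p s hps ih =>
    obtain ⟨B, hB⟩ := hd p (Finset.mem_insert_self p s)
    have hrest : ∀ q ∈ s, f q ∣ B := by
      intro q hq
      have hqA : f q ∣ f p * B := hB ▸ hd q (Finset.mem_insert_of_mem hq)
      have hqp : ¬ f q ∣ f p :=
        hnd q (Finset.mem_insert_of_mem hq) p (Finset.mem_insert_self p s)
          (fun hh => hps (hh ▸ hq))
      exact ((hp q (Finset.mem_insert_of_mem hq)).2.2 _ _ hqA).resolve_left hqp
    have := ih B (fun q hq => hp q (Finset.mem_insert_of_mem hq))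
      (fun q hq r hr => hnd q (Finset.mem_insert_of_mem hq) r (Finset.mem_insert_of_mem hr))
      hrest
    rw [Finset.prod_insert hps, hB]
    exact mul_dvd_mul_left (f p) this

lemma hc_of_homog {p : MvPolynomial (Fin n) ℤ} {m j : ℕ} (hp : p.IsHomogeneous j) :
    homogeneousComponent m p = if m = j then p else 0 :=
  homogeneousComponent_of_mem ((mem_homogeneousSubmodule _ _).mpr hp)

lemma homog_factor {a b c : MvPolynomial (Fin n) ℤ} {d e : ℕ}
    (h : a = b * c) (ha : a.IsHomogeneous d) (hb : b.IsHomogeneous e)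
    (hb0 : b ≠ 0) (hc0 : c ≠ 0) :
    e ≤ d ∧ c.IsHomogeneous (d - e) := by
  have comp : ∀ j : ℕ, b * homogeneousComponent j c = homogeneousComponent (e + j) a := by
    intro j
    conv_rhs => rw [h, ← sum_homogeneousComponent c]
    rw [Finset.mul_sum, map_sum]
    by_cases hj : j < c.totalDegree + 1
    · rw [Finset.sum_eq_single_of_mem j (Finset.mem_range.mpr hj)]
      · rw [hc_of_homog (hb.mul (homogeneousComponent_isHomogeneous j c)), if_pos rfl]
      · intro j' _ hj'
        rw [hc_of_homog (hb.mul (homogeneousComponent_isHomogeneous j' c)),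
          if_neg (by omega)]
    · rw [homogeneousComponent_eq_zero j c (by omega), mul_zero]
      symm
      apply Finset.sum_eq_zero
      intro j' hj'
      simp only [Finset.mem_range] at hj'
      rw [hc_of_homog (hb.mul (homogeneousComponent_isHomogeneous j' c)),
        if_neg (by omega)]
  have hcomp0 : ∀ j : ℕ, e + j ≠ d → homogeneousComponent j c = 0 := by
    intro j hj
    have h1 := comp j
    rw [hc_of_homog ha, if_neg hj] at h1
    exact (mul_eq_zero.mp h1).resolve_left hb0
  have hed : e ≤ d := by
    by_contra hed
    apply hc0
    rw [← sum_homogeneousComponent c]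
    apply Finset.sum_eq_zero
    intro j _
    exact hcomp0 j (by omega)
  refine ⟨hed, ?_⟩
  have hc : c = homogeneousComponent (d - e) c := by
    conv_lhs => rw [← sum_homogeneousComponent c]
    rw [Finset.sum_eq_single (d - e)]
    · intro j _ hj
      exact hcomp0 j (by omega)
    · intro hh
      exact homogeneousComponent_eq_zero _ c (by simp only [Finset.mem_range] at hh; omega)
  rw [hc]
  exact homogeneousComponent_isHomogeneous _ c

/- ---- psum / domLE combinatorics ---- -/

lemma psum_succ (l : Fin n → Bool) (j : ℕ) (hj : j < n) :
    _root_.psum n l (j + 1) = _root_.psum n l j + (if l ⟨j, hj⟩ = true then 1 else 0) := by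
  unfold _root_.psum
  by_cases hl : l ⟨j, hj⟩ = true
  · rw [if_pos hl]
    have hset : Finset.univ.filter (fun i : Fin n => i.val < j + 1 ∧ l i = true)
        = insert ⟨j, hj⟩ (Finset.univ.filter (fun i : Fin n => i.val < j ∧ l i = true)) := by
      ext i
      simp only [mem_filter, mem_univ, true_and, mem_insert]
      constructor
      · rintro ⟨h1, h2⟩
        rcases Nat.lt_succ_iff_lt_or_eq.mp h1 with hh | hh
        · exact Or.inr ⟨hh, h2⟩
        · exact Or.inl (Fin.ext hh)
      · rintro (rfl | ⟨h1, h2⟩)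
        · exact ⟨Nat.lt_succ_self j, hl⟩
        · exact ⟨Nat.lt_succ_of_lt h1, h2⟩
    rw [hset, card_insert_of_notMem]
    simp
  · rw [if_neg hl, add_zero]
    congr 1
    ext i
    simp only [mem_filter, mem_univ, true_and]
    constructor
    · rintro ⟨h1, h2⟩
      rcases Nat.lt_succ_iff_lt_or_eq.mp h1 with hh | hh
      · exact ⟨hh, h2⟩
      · exact absurd h2 (by rw [show i = ⟨j, hj⟩ from Fin.ext hh]; exact hl)
    · rintro ⟨h1, h2⟩
      exact ⟨Nat.lt_succ_of_lt h1, h2⟩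

lemma psum_mono (l : Fin n → Bool) {j j' : ℕ} (hjj : j ≤ j') :
    _root_.psum n l j ≤ _root_.psum n l j' := by
  apply Finset.card_le_card
  intro i hi
  simp only [mem_filter, mem_univ, true_and] at hi ⊢
  exact ⟨lt_of_lt_of_le hi.1 hjj, hi.2⟩

lemma psum_ge (l : Fin n → Bool) {j : ℕ} (hj : n ≤ j) : _root_.psum n l j = ones n l := by
  unfold _root_.psum ones
  congr 1
  ext i
  simp only [mem_filter, mem_univ, true_and]
  exact ⟨fun hh => hh.2, fun hh => ⟨lt_of_lt_of_le i.isLt hj, hh⟩⟩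

lemma psum_ext {l m : Fin n → Bool} (hh : ∀ j, _root_.psum n l j = _root_.psum n m j) : l = m := by
  funext i
  have h1 := psum_succ l i.val i.isLt
  have h2 := psum_succ m i.val i.isLt
  rw [Fin.eta] at h1 h2
  have h3 := hh i.val
  have h4 := hh (i.val + 1)
  cases hli : l i <;> cases hmi : m i
  · rfl
  · exfalso; simp [hli, hmi] at h1 h2; omega
  · exfalso; simp [hli, hmi] at h1 h2; omega
  · rfl

lemma dom_antisymm {l m : Fin n → Bool} (h1 : domLE n l m) (h2 : domLE n m l) : l = m :=
  psum_ext (fun j => le_antisymm (h1 j) (h2 j))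

lemma ones_comp_equiv (m : Fin n → Bool) (σ : Equiv.Perm (Fin n)) :
    ones n (m ∘ ⇑σ) = ones n m := by
  unfold ones
  apply Finset.card_bij (fun i _ => σ i)
  · intro a ha
    simp only [mem_filter, mem_univ, true_and, Function.comp_apply] at ha ⊢
    exact ha
  · intro a _ b _ hab
    exact σ.injective hab
  · intro b hb
    simp only [mem_filter, mem_univ, true_and] at hb ⊢
    exact ⟨σ.symm b, by simp [hb], by simp⟩

section Swap

variable {a b : Fin n} (m : Fin n → Bool)

lemma psum_swap_low (hab : a < b) {j : ℕ} (hj : j ≤ a.val) :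
    _root_.psum n (m ∘ ⇑(Equiv.swap a b)) j = _root_.psum n m j := by
  unfold _root_.psum
  congr 1
  ext i
  simp only [mem_filter, mem_univ, true_and, Function.comp_apply]
  have key : ∀ (hi : i.val < j), Equiv.swap a b i = i := by
    intro hi
    apply Equiv.swap_apply_of_ne_of_ne
    · intro hh; rw [hh] at hi; omega
    · intro hh; rw [hh] at hi; have := hab; rw [Fin.lt_def] at this; omega
  constructor
  · rintro ⟨h1, h2⟩; rw [key h1] at h2; exact ⟨h1, h2⟩
  · rintro ⟨h1, h2⟩; rw [key h1]; exact ⟨h1, h2⟩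

lemma psum_swap_high (hab : a < b) {j : ℕ} (hj : b.val < j) :
    _root_.psum n (m ∘ ⇑(Equiv.swap a b)) j = _root_.psum n m j := by
  unfold _root_.psum
  apply Finset.card_bij (fun i _ => Equiv.swap a b i)
  · intro p hp
    simp only [mem_filter, mem_univ, true_and, Function.comp_apply] at hp ⊢
    refine ⟨?_, hp.2⟩
    rcases eq_or_ne p a with rfl | hpa
    · rw [Equiv.swap_apply_left]; exact hj
    rcases eq_or_ne p b with rfl | hpb
    · rw [Equiv.swap_apply_right]
      rw [Fin.lt_def] at hab; omega
    · rw [Equiv.swap_apply_of_ne_of_ne hpa hpb]; exact hp.1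
  · intro p _ q _ hpq
    exact (Equiv.swap a b).injective hpq
  · intro q hq
    simp only [mem_filter, mem_univ, true_and] at hq ⊢
    refine ⟨Equiv.swap a b q, ⟨?_, ?_⟩, by simp⟩
    · rcases eq_or_ne q a with rfl | hqa
      · rw [Equiv.swap_apply_left]; rw [Fin.lt_def] at hab; omega
      rcases eq_or_ne q b with rfl | hqb
      · rw [Equiv.swap_apply_right]; rw [Fin.lt_def] at hab; omega
      · rw [Equiv.swap_apply_of_ne_of_ne hqa hqb]; exact hq.1
    · simp only [Function.comp_apply, Equiv.swap_apply_self]; exact hq.2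

lemma psum_swap_mid (hab : a < b) {j : ℕ} (hja : a.val < j) (hjb : j ≤ b.val) :
    _root_.psum n (m ∘ ⇑(Equiv.swap a b)) j + (if m a = true then 1 else 0)
      = _root_.psum n m j + (if m b = true then 1 else 0) := by
  unfold _root_.psum
  set F' := Finset.univ.filter (fun i : Fin n => i.val < j ∧ (m ∘ ⇑(Equiv.swap a b)) i = true)
    with hF'
  set F := Finset.univ.filter (fun i : Fin n => i.val < j ∧ m i = true) with hF
  have herase : F'.erase a = F.erase a := by
    ext i
    simp only [mem_erase, hF', hF, mem_filter, mem_univ, true_and, Function.comp_apply]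
    constructor
    · rintro ⟨hia, h1, h2⟩
      have hib : i ≠ b := by intro hh; rw [hh] at h1; omega
      rw [Equiv.swap_apply_of_ne_of_ne hia hib] at h2
      exact ⟨hia, h1, h2⟩
    · rintro ⟨hia, h1, h2⟩
      have hib : i ≠ b := by intro hh; rw [hh] at h1; omega
      rw [Equiv.swap_apply_of_ne_of_ne hia hib]
      exact ⟨hia, h1, h2⟩
  have key : ∀ (s : Finset (Fin n)), s.card = (s.erase a).card + (if a ∈ s then 1 else 0) := by
    intro s
    by_cases hh : a ∈ s
    · rw [if_pos hh, Finset.card_erase_add_one hh]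
    · rw [if_neg hh, Finset.erase_eq_of_notMem hh, add_zero]
  have hmemF' : a ∈ F' ↔ m b = true := by
    simp only [hF', mem_filter, mem_univ, true_and, Function.comp_apply, Equiv.swap_apply_left]
    exact ⟨fun hh => hh.2, fun hh => ⟨hja, hh⟩⟩
  have hmemF : a ∈ F ↔ m a = true := by
    simp only [hF, mem_filter, mem_univ, true_and]
    exact ⟨fun hh => hh.2, fun hh => ⟨hja, hh⟩⟩
  rw [key F', key F, herase]
  by_cases h1 : m a = true <;> by_cases h2 : m b = true <;>
    simp [h1, h2, hmemF', hmemF]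

lemma domLE_swap_down (hab : a < b) (hma : m a = true) (hmb : m b = false) :
    domLE n (m ∘ ⇑(Equiv.swap a b)) m := by
  intro j
  rcases le_or_gt j a.val with hj | hj
  · rw [psum_swap_low m hab hj]
  rcases le_or_gt j b.val with hj' | hj'
  · have := psum_swap_mid m hab hj hj'
    rw [hma, hmb] at this
    simp at this
    omega
  · rw [psum_swap_high m hab hj']

lemma swap_ne (hma : m a = true) (hmb : m b = false) : m ∘ ⇑(Equiv.swap a b) ≠ m := by
  intro hh
  have := congrFun hh a
  simp only [Function.comp_apply, Equiv.swap_apply_left] at this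
  rw [hmb, hma] at this
  exact absurd this (by simp)

end Swap

lemma card_pairs_eq_sum (l : Fin n → Bool) (P : Bool) :
    (Finset.univ.filter (fun p : Fin n × Fin n =>
      p.1 < p.2 ∧ l p.1 = true ∧ l p.2 = P)).card
    = ∑ j ∈ Finset.univ.filter (fun j : Fin n => l j = P), _root_.psum n l j.val := by
  rw [Finset.card_eq_sum_card_fiberwise
    (f := Prod.snd) (t := Finset.univ.filter (fun j : Fin n => l j = P))
    (fun p hp => by simp only [coe_filter, mem_coe, mem_filter, mem_univ, true_and, Set.mem_setOf_eq] at hp ⊢; exact hp.2.2)]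
  apply Finset.sum_congr rfl
  intro j hj
  simp only [mem_filter, mem_univ, true_and] at hj
  unfold _root_.psum
  apply Finset.card_bij (fun p _ => p.1)
  · intro p hp
    simp only [mem_filter, mem_univ, true_and] at hp ⊢
    obtain ⟨⟨h1, h2, _⟩, h4⟩ := hp
    subst h4
    exact ⟨h1, h2⟩
  · intro p hp q hq hpq
    simp only [mem_filter] at hp hq
    exact Prod.ext hpq (hp.2.trans hq.2.symm)
  · intro i hi
    simp only [mem_filter, mem_univ, true_and] at hi ⊢
    exact ⟨(i, j), ⟨⟨hi.1, hi.2, hj⟩, rfl⟩, rfl⟩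

lemma two_mul_pairs_true (l : Fin n → Bool) :
    2 * (Finset.univ.filter (fun p : Fin n × Fin n =>
      p.1 < p.2 ∧ l p.1 = true ∧ l p.2 = true)).card
    = ones n l * ones n l - ones n l := by
  set s := Finset.univ.filter (fun i : Fin n => l i = true) with hs
  set LT := Finset.univ.filter (fun p : Fin n × Fin n =>
      p.1 < p.2 ∧ l p.1 = true ∧ l p.2 = true) with hLT
  set GT := Finset.univ.filter (fun p : Fin n × Fin n =>
      p.2 < p.1 ∧ l p.1 = true ∧ l p.2 = true) with hGT
  have hcard : LT.card = GT.card := by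
    apply Finset.card_bij (fun p _ => Prod.swap p)
    · intro p hp
      simp only [hLT, hGT, mem_filter, mem_univ, true_and, Prod.fst_swap, Prod.snd_swap] at hp ⊢
      tauto
    · intro p _ q _ hpq
      exact Prod.swap_injective hpq
    · intro q hq
      simp only [hLT, hGT, mem_filter, mem_univ, true_and] at hq ⊢
      exact ⟨Prod.swap q, by simpa using And.intro hq.1 ⟨hq.2.2, hq.2.1⟩, Prod.swap_swap q⟩
  have hunion : s.offDiag = LT ∪ GT := by
    ext p
    simp only [Finset.mem_offDiag, hLT, hGT, mem_union, mem_filter, mem_univ, true_and, hs]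
    constructor
    · rintro ⟨h1, h2, h3⟩
      rcases lt_or_gt_of_ne h3 with hh | hh
      · exact Or.inl ⟨hh, h1, h2⟩
      · exact Or.inr ⟨hh, h1, h2⟩
    · rintro (⟨h1, h2, h3⟩ | ⟨h1, h2, h3⟩)
      · exact ⟨h2, h3, ne_of_lt h1⟩
      · exact ⟨h2, h3, ne_of_gt h1⟩
  have hdisj : Disjoint LT GT := by
    rw [Finset.disjoint_left]
    intro p hp hq
    simp only [hLT, hGT, mem_filter, mem_univ, true_and] at hp hq
    exact absurd (hp.1.trans hq.1) (lt_irrefl _)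
  have hoff := Finset.offDiag_card s
  rw [hunion, Finset.card_union_of_disjoint hdisj] at hoff
  rw [show ones n l = s.card from rfl]
  set M := s.card * s.card with hM
  omega

lemma sum_psum_eq (l : Fin n → Bool) :
    ∑ j : Fin n, _root_.psum n l j.val
      = invCount n l + (Finset.univ.filter (fun p : Fin n × Fin n =>
        p.1 < p.2 ∧ l p.1 = true ∧ l p.2 = true)).card := by
  have hsplit := Finset.sum_filter_add_sum_filter_not Finset.univ
    (fun j : Fin n => l j = true) (fun j : Fin n => _root_.psum n l j.val)
  have h1 : Finset.univ.filter (fun j : Fin n => ¬ l j = true)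
      = Finset.univ.filter (fun j : Fin n => l j = false) := by
    ext j; simp [Bool.not_eq_true]
  rw [h1] at hsplit
  have hfalse := card_pairs_eq_sum l false
  have htrue := card_pairs_eq_sum l true
  have hinv : invCount n l = (Finset.univ.filter (fun p : Fin n × Fin n =>
      p.1 < p.2 ∧ l p.1 = true ∧ l p.2 = false)).card := rfl
  omega

lemma invCount_lt_of_domLE {l m : Fin n → Bool} (hdom : domLE n l m) (hne : l ≠ m)
    (hones : ones n l = ones n m) : invCount n l < invCount n m := by
  have hex : ∃ j0 : ℕ, _root_.psum n l j0 < _root_.psum n m j0 := by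
    by_contra hc
    push_neg at hc
    exact hne (psum_ext (fun j => le_antisymm (hdom j) (hc j)))
  obtain ⟨j0, hj0⟩ := hex
  have hj0n : j0 < n := by
    by_contra hc
    push_neg at hc
    rw [psum_ge l hc, psum_ge m hc, hones] at hj0
    exact lt_irrefl _ hj0
  have hsum : ∑ j : Fin n, _root_.psum n l j.val < ∑ j : Fin n, _root_.psum n m j.val := by
    apply Finset.sum_lt_sum
    · exact fun j _ => hdom j.val
    · exact ⟨⟨j0, hj0n⟩, Finset.mem_univ _, hj0⟩
  have h1 := sum_psum_eq l
  have h2 := sum_psum_eq m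
  have h3 := two_mul_pairs_true l
  have h4 := two_mul_pairs_true m
  rw [hones] at h3
  set M := ones n m * ones n m with hM
  omega

/- ---- invProd and adjacent swaps ---- -/

lemma swap_adj_lt {a b p q : Fin n} (hb : (b : ℕ) = (a : ℕ) + 1) (hpq : p < q)
    (hne : ¬(p = a ∧ q = b)) : Equiv.swap a b p < Equiv.swap a b q := by
  rw [Fin.lt_def] at hpq
  rcases eq_or_ne p a with rfl | hpa
  · rcases eq_or_ne q b with rfl | hqb
    · exact absurd ⟨rfl, rfl⟩ hne
    · have hqa : q ≠ p := by
        intro hh; rw [hh] at hpq; omega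
      rw [Equiv.swap_apply_left, Equiv.swap_apply_of_ne_of_ne hqa hqb, Fin.lt_def]
      have : (q : ℕ) ≠ (b : ℕ) := fun hh => hqb (Fin.ext hh)
      omega
  rcases eq_or_ne p b with rfl | hpb
  · have hqb : q ≠ p := by intro hh; rw [hh] at hpq; omega
    have hqa : q ≠ a := by
      intro hh; rw [hh] at hpq; omega
    rw [Equiv.swap_apply_right, Equiv.swap_apply_of_ne_of_ne hqa hqb, Fin.lt_def]
    omega
  · rw [Equiv.swap_apply_of_ne_of_ne hpa hpb]
    have hpa' : (p : ℕ) ≠ (a : ℕ) := fun hh => hpa (Fin.ext hh)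
    have hpb' : (p : ℕ) ≠ (b : ℕ) := fun hh => hpb (Fin.ext hh)
    rcases eq_or_ne q a with rfl | hqa
    · rw [Equiv.swap_apply_left, Fin.lt_def]; omega
    rcases eq_or_ne q b with rfl | hqb
    · rw [Equiv.swap_apply_right, Fin.lt_def]; omega
    · rw [Equiv.swap_apply_of_ne_of_ne hqa hqb, Fin.lt_def]; exact hpq

lemma rename_invProd (l : Fin n → Bool) (σ : Equiv.Perm (Fin n)) :
    rename ⇑σ (invProd n l) = ∏ p ∈ Finset.univ.filter (fun p : Fin n × Fin n =>
      p.1 < p.2 ∧ l p.1 = true ∧ l p.2 = false), (X (σ p.2) - X (σ p.1)) := by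
  unfold invProd
  rw [map_prod]
  apply Finset.prod_congr rfl
  intro p _
  rw [map_sub, rename_X, rename_X]

lemma invProd_homog (l : Fin n → Bool) : (invProd n l).IsHomogeneous (invCount n l) := by
  unfold invProd invCount
  have hp := MvPolynomial.IsHomogeneous.prod
    (Finset.univ.filter (fun p : Fin n × Fin n =>
      p.1 < p.2 ∧ l p.1 = true ∧ l p.2 = false))
    (fun p : Fin n × Fin n => (X p.2 - X p.1 : MvPolynomial (Fin n) ℤ))
    (fun _ => 1)
    (fun p _ => (isHomogeneous_X _ _).sub (isHomogeneous_X _ _))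
  rwa [Finset.sum_const, smul_eq_mul, mul_one] at hp

lemma invProd_ne_zero (l : Fin n → Bool) : invProd n l ≠ 0 := by
  unfold invProd
  rw [Finset.prod_ne_zero_iff]
  intro p hp
  simp only [mem_filter, mem_univ, true_and] at hp
  exact X_sub_X_ne_zero (ne_of_lt hp.1).symm

section Adjacent

variable {a b : Fin n}

lemma rename_swap_invProd_fix (hb : (b : ℕ) = (a : ℕ) + 1) (l : Fin n → Bool) (hl : l a = l b) :
    rename ⇑(Equiv.swap a b) (invProd n l) = invProd n l := by
  have hcomp : ∀ t, l (Equiv.swap a b t) = l t := by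
    intro t
    rcases eq_or_ne t a with rfl | hta
    · rw [Equiv.swap_apply_left, hl]
    rcases eq_or_ne t b with rfl | htb
    · rw [Equiv.swap_apply_right, hl]
    · rw [Equiv.swap_apply_of_ne_of_ne hta htb]
  rw [rename_invProd]
  unfold invProd
  apply Finset.prod_bij' (fun p (_ : p ∈ Finset.univ.filter (fun p : Fin n × Fin n =>
        p.1 < p.2 ∧ l p.1 = true ∧ l p.2 = false)) =>
      (Equiv.swap a b p.1, Equiv.swap a b p.2))
    (fun p _ => (Equiv.swap a b p.1, Equiv.swap a b p.2))
  · intro p hp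
    simp only [mem_filter, mem_univ, true_and] at hp ⊢
    obtain ⟨h1, h2, h3⟩ := hp
    have hnab : ¬(p.1 = a ∧ p.2 = b) := by
      rintro ⟨ha1, hb1⟩
      rw [ha1] at h2; rw [hb1] at h3
      rw [h2, h3] at hl
      simp at hl
    exact ⟨swap_adj_lt hb h1 hnab, by rw [hcomp]; exact h2, by rw [hcomp]; exact h3⟩
  · intro p hp
    simp only [mem_filter, mem_univ, true_and] at hp ⊢
    obtain ⟨h1, h2, h3⟩ := hp
    have hnab : ¬(p.1 = a ∧ p.2 = b) := by
      rintro ⟨ha1, hb1⟩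
      rw [ha1] at h2; rw [hb1] at h3
      rw [h2, h3] at hl
      simp at hl
    exact ⟨swap_adj_lt hb h1 hnab, by rw [hcomp]; exact h2, by rw [hcomp]; exact h3⟩
  · intro p _
    simp [Equiv.swap_apply_self]
  · intro p _
    simp [Equiv.swap_apply_self]
  · intro p _
    rfl

lemma mem_inv_ab (hb : (b : ℕ) = (a : ℕ) + 1) (l : Fin n → Bool) (ha : l a = true)
    (hbf : l b = false) :
    (a, b) ∈ Finset.univ.filter (fun p : Fin n × Fin n =>
      p.1 < p.2 ∧ l p.1 = true ∧ l p.2 = false) := by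
  simp only [mem_filter, mem_univ, true_and]
  exact ⟨by rw [Fin.lt_def]; omega, ha, hbf⟩

lemma erase_inv_bij (hb : (b : ℕ) = (a : ℕ) + 1) (l : Fin n → Bool) (ha : l a = true)
    (hbf : l b = false)
    {M : Type*} [CommMonoid M] (f : Fin n × Fin n → M) :
    ∏ p ∈ (Finset.univ.filter (fun p : Fin n × Fin n =>
        p.1 < p.2 ∧ l p.1 = true ∧ l p.2 = false)).erase (a, b),
      f (Equiv.swap a b p.1, Equiv.swap a b p.2)
    = ∏ p ∈ Finset.univ.filter (fun p : Fin n × Fin n =>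
        p.1 < p.2 ∧ (l ∘ ⇑(Equiv.swap a b)) p.1 = true
          ∧ (l ∘ ⇑(Equiv.swap a b)) p.2 = false), f p := by
  have hab : a ≠ b := by intro hh; rw [hh] at hb; omega
  apply Finset.prod_bij' (fun p (_ : p ∈ (Finset.univ.filter (fun p : Fin n × Fin n =>
        p.1 < p.2 ∧ l p.1 = true ∧ l p.2 = false)).erase (a, b)) =>
      (Equiv.swap a b p.1, Equiv.swap a b p.2))
    (fun p _ => (Equiv.swap a b p.1, Equiv.swap a b p.2))
  · intro p hp
    simp only [mem_erase, mem_filter, mem_univ, true_and, Function.comp_apply] at hp ⊢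
    obtain ⟨hne, h1, h2, h3⟩ := hp
    have hnab : ¬(p.1 = a ∧ p.2 = b) := by
      rintro ⟨ha1, hb1⟩
      exact hne (Prod.ext ha1 hb1)
    refine ⟨swap_adj_lt hb h1 hnab, ?_, ?_⟩
    · rw [Equiv.swap_apply_self]; exact h2
    · rw [Equiv.swap_apply_self]; exact h3
  · intro p hp
    simp only [mem_erase, mem_filter, mem_univ, true_and, Function.comp_apply] at hp ⊢
    obtain ⟨h1, h2, h3⟩ := hp
    have hnab : ¬(p.1 = a ∧ p.2 = b) := by
      rintro ⟨ha1, hb1⟩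
      rw [ha1, Equiv.swap_apply_left] at h2
      rw [h2] at hbf
      simp at hbf
    refine ⟨?_, swap_adj_lt hb h1 hnab, h2, h3⟩
    · intro hh
      rw [Prod.ext_iff] at hh
      obtain ⟨hh1, hh2⟩ := hh
      have h1' : p.1 = b := by
        have := congrArg (Equiv.swap a b) hh1
        rwa [Equiv.swap_apply_self, Equiv.swap_apply_left] at this
      have h2' : p.2 = a := by
        have := congrArg (Equiv.swap a b) hh2
        rwa [Equiv.swap_apply_self, Equiv.swap_apply_right] at this
      rw [h1', h2', Fin.lt_def] at h1
      omega
  · intro p _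
    simp [Equiv.swap_apply_self]
  · intro p _
    simp [Equiv.swap_apply_self]
  · intro p _
    simp [Equiv.swap_apply_self]

lemma rename_swap_invProd_down (hb : (b : ℕ) = (a : ℕ) + 1) (l : Fin n → Bool)
    (ha : l a = true) (hbf : l b = false) :
    rename ⇑(Equiv.swap a b) (invProd n l)
      = (X a - X b) * invProd n (l ∘ ⇑(Equiv.swap a b)) := by
  rw [rename_invProd]
  have hsplit := Finset.mul_prod_erase
    (Finset.univ.filter (fun p : Fin n × Fin n =>
      p.1 < p.2 ∧ l p.1 = true ∧ l p.2 = false))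
    (fun p : Fin n × Fin n =>
      (X (Equiv.swap a b p.2) - X (Equiv.swap a b p.1) : MvPolynomial (Fin n) ℤ))
    (mem_inv_ab hb l ha hbf)
  rw [← hsplit]
  congr 1
  · simp only [Equiv.swap_apply_left, Equiv.swap_apply_right]
  · unfold invProd
    exact erase_inv_bij hb l ha hbf
      (fun p : Fin n × Fin n => (X p.2 - X p.1 : MvPolynomial (Fin n) ℤ))

lemma invCount_swap_down (hb : (b : ℕ) = (a : ℕ) + 1) (l : Fin n → Bool)
    (ha : l a = true) (hbf : l b = false) :
    invCount n (l ∘ ⇑(Equiv.swap a b)) + 1 = invCount n l := by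
  have h1 := Finset.card_erase_add_one (mem_inv_ab hb l ha hbf)
  have hab : a ≠ b := by intro hh; rw [hh] at hb; omega
  have h2 : ((Finset.univ.filter (fun p : Fin n × Fin n =>
        p.1 < p.2 ∧ l p.1 = true ∧ l p.2 = false)).erase (a, b)).card
      = invCount n (l ∘ ⇑(Equiv.swap a b)) := by
    unfold invCount
    apply Finset.card_bij (fun p (_ : p ∈ (Finset.univ.filter (fun p : Fin n × Fin n =>
        p.1 < p.2 ∧ l p.1 = true ∧ l p.2 = false)).erase (a, b)) =>
      (Equiv.swap a b p.1, Equiv.swap a b p.2))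
    · intro p hp
      simp only [mem_erase, mem_filter, mem_univ, true_and, Function.comp_apply] at hp ⊢
      obtain ⟨hne, hp1, hp2, hp3⟩ := hp
      have hnab : ¬(p.1 = a ∧ p.2 = b) := by
        rintro ⟨ha1, hb1⟩
        exact hne (Prod.ext ha1 hb1)
      refine ⟨swap_adj_lt hb hp1 hnab, ?_, ?_⟩
      · rw [Equiv.swap_apply_self]; exact hp2
      · rw [Equiv.swap_apply_self]; exact hp3
    · intro p _ q _ hpq
      rw [Prod.ext_iff] at hpq ⊢
      obtain ⟨hh1, hh2⟩ := hpq
      exact ⟨(Equiv.swap a b).injective hh1, (Equiv.swap a b).injective hh2⟩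
    · intro q hq
      simp only [mem_erase, mem_filter, mem_univ, true_and, Function.comp_apply] at hq
      obtain ⟨hq1, hq2, hq3⟩ := hq
      have hnab : ¬(q.1 = a ∧ q.2 = b) := by
        rintro ⟨ha1, hb1⟩
        rw [ha1, Equiv.swap_apply_left] at hq2
        rw [hq2] at hbf
        simp at hbf
      refine ⟨(Equiv.swap a b q.1, Equiv.swap a b q.2), ?_, ?_⟩
      · simp only [mem_erase, mem_filter, mem_univ, true_and]
        refine ⟨?_, swap_adj_lt hb hq1 hnab, hq2, hq3⟩
        intro hh
        rw [Prod.ext_iff] at hh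
        obtain ⟨hh1, hh2⟩ := hh
        have h1' : q.1 = b := by
          have := congrArg (Equiv.swap a b) hh1
          rwa [Equiv.swap_apply_self, Equiv.swap_apply_left] at this
        have h2' : q.2 = a := by
          have := congrArg (Equiv.swap a b) hh2
          rwa [Equiv.swap_apply_self, Equiv.swap_apply_right] at this
        rw [h1', h2', Fin.lt_def] at hq1
        omega
      · simp [Equiv.swap_apply_self]
  unfold invCount at h2 ⊢
  omega

lemma domLE_pull (hb : (b : ℕ) = (a : ℕ) + 1) (lam m : Fin n → Bool)
    (hcase : lam a = false ∨ lam b = true)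
    (hdom : domLE n lam (m ∘ ⇑(Equiv.swap a b))) : domLE n lam m := by
  have hab : a < b := by rw [Fin.lt_def]; omega
  intro j
  by_cases hj1 : j ≤ a.val
  · have := hdom j
    rwa [psum_swap_low m hab hj1] at this
  by_cases hj2 : b.val < j
  · have := hdom j
    rwa [psum_swap_high m hab hj2] at this
  have hj : j = b.val := by omega
  subst hj
  rcases hcase with hca | hcb
  · have h1 : _root_.psum n lam b.val = _root_.psum n lam a.val := by
      rw [show b.val = a.val + 1 from hb, psum_succ lam a.val a.isLt, Fin.eta, hca]
      simp
    have h2 := hdom a.val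
    rw [psum_swap_low m hab (le_refl _)] at h2
    have h4 : _root_.psum n m a.val ≤ _root_.psum n m b.val := psum_mono m (by omega)
    omega
  · have h1 : _root_.psum n lam (b.val + 1) = _root_.psum n lam b.val + 1 := by
      rw [psum_succ lam b.val b.isLt, Fin.eta, hcb]
      simp
    have h2 := hdom (b.val + 1)
    rw [psum_swap_high m hab (show b.val < b.val + 1 by omega)] at h2
    have h4 : _root_.psum n m (b.val + 1) ≤ _root_.psum n m b.val + 1 := by
      rw [psum_succ m b.val b.isLt]
      split_ifs <;> omega
    omega

lemma domLE_push (hb : (b : ℕ) = (a : ℕ) + 1) (lam m : Fin n → Bool)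
    (ha : lam a = true) (hbf : lam b = false)
    (hdom : domLE n lam (m ∘ ⇑(Equiv.swap a b))) :
    domLE n (lam ∘ ⇑(Equiv.swap a b)) m := by
  have hab : a < b := by rw [Fin.lt_def]; omega
  intro j
  by_cases hj1 : j ≤ a.val
  · rw [psum_swap_low lam hab hj1]
    have := hdom j
    rwa [psum_swap_low m hab hj1] at this
  by_cases hj2 : b.val < j
  · rw [psum_swap_high lam hab hj2]
    have := hdom j
    rwa [psum_swap_high m hab hj2] at this
  have hj : j = b.val := by omega
  subst hj
  have hja : a.val < b.val := by omega
  have hl := psum_swap_mid lam hab hja (le_refl _)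
  rw [ha, hbf] at hl
  simp only [if_pos rfl] at hl
  norm_num at hl
  have hm := psum_swap_mid m hab hja (le_refl _)
  have h2 := hdom b.val
  by_cases hma : m a = true <;> by_cases hmb : m b = true <;>
    simp [hma, hmb] at hm <;> omega

end Adjacent

/- ---- anti-invariance ---- -/

lemma anti_swap (a b : Fin n) (γ : (Fin n → Bool) → MvPolynomial (Fin n) ℤ)
    (m : Fin n → Bool) :
    rename ⇑(Equiv.swap a b) (γ (m ∘ ⇑(Equiv.swap a b))
      - rename ⇑(Equiv.swap a b) (γ ((m ∘ ⇑(Equiv.swap a b)) ∘ ⇑(Equiv.swap a b))))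
    = -(γ m - rename ⇑(Equiv.swap a b) (γ (m ∘ ⇑(Equiv.swap a b)))) := by
  have hcomp : (m ∘ ⇑(Equiv.swap a b)) ∘ ⇑(Equiv.swap a b) = m := by
    funext x; simp [Function.comp, Equiv.swap_apply_self]
  rw [hcomp, map_sub]
  rw [show rename ⇑(Equiv.swap a b) (rename ⇑(Equiv.swap a b) (γ m)) = γ m from ?_]
  · ring
  · rw [rename_rename]
    rw [show ⇑(Equiv.swap a b) ∘ ⇑(Equiv.swap a b) = id from
      funext fun x => Equiv.swap_apply_self a b x]
    exact rename_id_apply _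

lemma comp_swap_conj (m : Fin n → Bool) (a b p q : Fin n) :
    (m ∘ ⇑(Equiv.swap p q)) ∘ ⇑(Equiv.swap a b)
      = (m ∘ ⇑(Equiv.swap a b)) ∘ ⇑(Equiv.swap (Equiv.swap a b p) (Equiv.swap a b q)) := by
  funext x
  simp only [Function.comp_apply]
  congr 1
  have h := Equiv.swap_apply_apply (Equiv.swap a b) p q
  rw [h]
  simp [Equiv.Perm.mul_apply, Equiv.swap_apply_self]

end Helpers

/- ========= main argument ========= -/

section MainArg

variable {n : ℕ}

lemma vanishing (k : ℕ) (lam : Fin n → Bool) (hlamk : ones n lam = k)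
    (α : (Fin n → Bool) → MvPolynomial (Fin n) ℤ)
    (hG : IsGKM n k α)
    (hhom : ∀ m, ones n m = k → (α m).IsHomogeneous (invCount n lam))
    (hsupp : SuppAbove n k α lam)
    (h0 : α lam = 0) :
    ∀ m, ones n m = k → α m = 0 := by
  classical
  by_contra hc
  push_neg at hc
  obtain ⟨m0, hm0k, hm0⟩ := hc
  set T : Finset (Fin n → Bool) :=
    Finset.univ.filter (fun m => ones n m = k ∧ α m ≠ 0) with hT
  have hne : T.Nonempty := ⟨m0, by simp [hT, hm0k, hm0]⟩
  obtain ⟨m, hmT, hmin⟩ := Finset.exists_min_image T (fun m => invCount n m) hne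
  simp only [hT, Finset.mem_filter, Finset.mem_univ, true_and] at hmT
  obtain ⟨hmk, hm⟩ := hmT
  have hdvd : ∀ p ∈ Finset.univ.filter (fun p : Fin n × Fin n =>
      p.1 < p.2 ∧ m p.1 = true ∧ m p.2 = false),
      (X p.2 - X p.1 : MvPolynomial (Fin n) ℤ) ∣ α m := by
    intro p hp
    simp only [Finset.mem_filter, Finset.mem_univ, true_and] at hp
    obtain ⟨hplt, hp1, hp2⟩ := hp
    have hm'0 : α (m ∘ ⇑(Equiv.swap p.1 p.2)) = 0 := by
      by_contra hm'
      have hm'k : ones n (m ∘ ⇑(Equiv.swap p.1 p.2)) = k := by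
        rw [ones_comp_equiv]; exact hmk
      have hmem : (m ∘ ⇑(Equiv.swap p.1 p.2)) ∈ T := by simp [hT, hm'k, hm']
      have hle := hmin _ hmem
      have hlt := invCount_lt_of_domLE (domLE_swap_down m hplt hp1 hp2)
        (swap_ne m hp1 hp2) (by rw [ones_comp_equiv])
      omega
    have hd := hG m hmk p.1 p.2
    rw [hm'0, sub_zero] at hd
    have hneg : (X p.2 - X p.1 : MvPolynomial (Fin n) ℤ) = -(X p.1 - X p.2) := by ring
    rw [hneg, neg_dvd]
    exact hd
  have hprod : invProd n m ∣ α m := by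
    unfold invProd
    apply prod_primes_dvd' _ _ _ ?_ ?_ hdvd
    · intro p hp
      simp only [Finset.mem_filter, Finset.mem_univ, true_and] at hp
      exact prime_X_sub_X (ne_of_lt hp.1).symm
    · intro p hp q hq hpq
      simp only [Finset.mem_filter, Finset.mem_univ, true_and] at hp hq
      intro hdd
      rcases eq_or_ne q.1 p.1 with hq1 | hq1
      · rcases eq_or_ne q.2 p.2 with hq2 | hq2
        · exact hpq (Prod.ext hq1 hq2).symm
        · exact not_dvd_X_sub_X q.2 (Or.inl rfl) hq2
            (by rw [← hq1]; exact (ne_of_lt hq.1).symm) (ne_of_lt hq.1).symm hdd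
      · rcases eq_or_ne q.1 p.2 with hq1b | hq1b
        · have hq2p2 : q.2 ≠ p.2 := by
            rw [← hq1b]; exact (ne_of_lt hq.1).symm
          have hq2p1 : q.2 ≠ p.1 := by
            have h1 : p.1 < q.2 := lt_trans (hq1b ▸ hp.1) hq.1
            exact (ne_of_lt h1).symm
          exact not_dvd_X_sub_X q.2 (Or.inl rfl) hq2p2 hq2p1 (ne_of_lt hq.1).symm hdd
        · exact not_dvd_X_sub_X q.1 (Or.inr rfl) hq1b hq1 (ne_of_lt hq.1).symm hdd
  obtain ⟨c, hc⟩ := hprod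
  have hc0 : c ≠ 0 := by
    intro hh
    rw [hh, mul_zero] at hc
    exact hm hc
  have hfac := homog_factor hc (hhom m hmk) (invProd_homog m) (invProd_ne_zero m) hc0
  have hd1 : domLE n lam m := hsupp m hmk hm
  have hd2 : lam ≠ m := by
    intro hh
    rw [← hh] at hm
    exact hm h0
  have hd3 := invCount_lt_of_domLE hd1 hd2 (hlamk.trans hmk.symm)
  omega

lemma uniq (k : ℕ) (lam : Fin n → Bool) (hlamk : ones n lam = k)
    (α β : (Fin n → Bool) → MvPolynomial (Fin n) ℤ)
    (hGα : IsGKM n k α) (hGβ : IsGKM n k β)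
    (hhomα : ∀ m, ones n m = k → (α m).IsHomogeneous (invCount n lam))
    (hhomβ : ∀ m, ones n m = k → (β m).IsHomogeneous (invCount n lam))
    (hsα : SuppAbove n k α lam) (hsβ : SuppAbove n k β lam)
    (hval : α lam = β lam) :
    ∀ m, ones n m = k → α m = β m := by
  intro m hmk
  have hv := vanishing k lam hlamk (fun m => α m - β m) ?_ ?_ ?_ ?_ m hmk
  · exact sub_eq_zero.mp hv
  · intro l hl p q
    have h1 := hGα l hl p q
    have h2 := hGβ l hl p q
    have := dvd_sub h1 h2
    convert this using 1
    ring
  · intro m hmk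
    exact (hhomα m hmk).sub (hhomβ m hmk)
  · intro m hmk hne
    by_cases hα : α m = 0
    · have hβ : β m ≠ 0 := by
        intro hβ
        apply hne
        show α m - β m = 0
        rw [hα, hβ, sub_zero]
      exact hsβ m hmk hβ
    · exact hsα m hmk hα
  · show α lam - β lam = 0
    rw [hval, sub_self]

lemma caseA (k i : ℕ) (h : i + 1 < n)
    (S : (Fin n → Bool) → (Fin n → Bool) → MvPolynomial (Fin n) ℤ)
    (hS : IsSchubertFamily n k S)
    (lam : Fin n → Bool) (hlamk : ones n lam = k)
    (ha : lam ⟨i, Nat.lt_of_succ_lt h⟩ = true) (hbf : lam ⟨i + 1, h⟩ = false) :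
    ∀ m, ones n m = k →
      S lam m - rename ⇑(Equiv.swap (⟨i, Nat.lt_of_succ_lt h⟩ : Fin n) ⟨i + 1, h⟩)
          (S lam (m ∘ ⇑(Equiv.swap (⟨i, Nat.lt_of_succ_lt h⟩ : Fin n) ⟨i + 1, h⟩))) =
        (X ⟨i + 1, h⟩ - X ⟨i, Nat.lt_of_succ_lt h⟩) *
          S (lam ∘ ⇑(Equiv.swap (⟨i, Nat.lt_of_succ_lt h⟩ : Fin n) ⟨i + 1, h⟩)) m := by
  set a : Fin n := ⟨i, Nat.lt_of_succ_lt h⟩ with hadef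
  set b : Fin n := ⟨i + 1, h⟩ with hbdef
  have hb : (b : ℕ) = (a : ℕ) + 1 := rfl
  have hab : a < b := by rw [Fin.lt_def, hadef, hbdef]; omega
  have hab' : a ≠ b := ne_of_lt hab
  set σ := Equiv.swap a b with hσ
  obtain ⟨hG, hsupp, hval, hhom⟩ := hS lam hlamk
  set μ := lam ∘ ⇑σ with hμ
  have hμk : ones n μ = k := by rw [hμ, ones_comp_equiv]; exact hlamk
  obtain ⟨hGμ, hsuppμ, hvalμ, hhomμ⟩ := hS μ hμk
  have hXne : (X b - X a : MvPolynomial (Fin n) ℤ) ≠ 0 := X_sub_X_ne_zero hab'.symm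
  have hQdvd : ∀ m, ones n m = k → (X b - X a : MvPolynomial (Fin n) ℤ) ∣
      (S lam m - rename ⇑σ (S lam (m ∘ ⇑σ))) := by
    intro m hmk
    have h1 := hG m hmk a b
    have h2 := dvd_sub_rename_swap a b (S lam (m ∘ ⇑σ))
    have h3 := dvd_add h1 h2
    rw [show (X b - X a : MvPolynomial (Fin n) ℤ) = -(X a - X b) from by ring, neg_dvd]
    convert h3 using 1
    rw [hσ]
    ring
  have hex : ∀ m, ∃ r, ones n m = k →
      S lam m - rename ⇑σ (S lam (m ∘ ⇑σ)) = (X b - X a) * r := by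
    intro m
    by_cases hmk : ones n m = k
    · obtain ⟨r, hr⟩ := hQdvd m hmk
      exact ⟨r, fun _ => hr⟩
    · exact ⟨0, fun hh => absurd hh hmk⟩
  choose R hR using hex
  have hanti : ∀ m, ones n m = k → rename ⇑σ (R (m ∘ ⇑σ)) = R m := by
    intro m hmk
    have hmσk : ones n (m ∘ ⇑σ) = k := by rw [ones_comp_equiv]; exact hmk
    have h1 := anti_swap a b (S lam) m
    rw [← hσ] at h1
    rw [hR m hmk, hR (m ∘ ⇑σ) hmσk] at h1
    rw [map_mul, map_sub, rename_X, rename_X] at h1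
    rw [hσ, Equiv.swap_apply_left, Equiv.swap_apply_right, ← hσ] at h1
    apply mul_left_cancel₀ hXne
    rw [show (X b - X a : MvPolynomial (Fin n) ℤ) * rename ⇑σ (R (m ∘ ⇑σ))
      = -((X a - X b) * rename ⇑σ (R (m ∘ ⇑σ))) from by ring, h1]
    ring
  have hRG : IsGKM n k R := by
    intro l hlk p q
    have hlσk : ones n (l ∘ ⇑σ) = k := by rw [ones_comp_equiv]; exact hlk
    have hlswk : ones n (l ∘ ⇑(Equiv.swap p q)) = k := by rw [ones_comp_equiv]; exact hlk
    rcases eq_or_ne p q with rfl | hpq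
    · rw [Equiv.swap_self]
      rw [show l ∘ ⇑(Equiv.refl (Fin n)) = l from rfl, sub_self (R l)]
      exact dvd_zero _
    by_cases hcase : (p = a ∧ q = b) ∨ (p = b ∧ q = a)
    · have hswap_eq : Equiv.swap p q = σ := by
        rcases hcase with ⟨rfl, rfl⟩ | ⟨rfl, rfl⟩
        · rw [hσ]
        · rw [hσ]; exact Equiv.swap_comm _ _
      rw [hswap_eq]
      have h1 := hanti l hlk
      have h2 := dvd_sub_rename_swap a b (R (l ∘ ⇑σ))
      rw [← hσ, h1] at h2
      have hflip : R l - R (l ∘ ⇑σ) = -(R (l ∘ ⇑σ) - R l) := by ring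
      rcases hcase with ⟨rfl, rfl⟩ | ⟨rfl, rfl⟩
      · rw [hflip, dvd_neg]
        exact h2
      · rw [hflip, dvd_neg,
          show (X b - X a : MvPolynomial (Fin n) ℤ) = -(X a - X b) from by ring, neg_dvd]
        exact h2
    · have hprime := prime_X_sub_X hpq
      have hconj := comp_swap_conj l a b p q
      rw [← hσ] at hconj
      have hGd := hG (l ∘ ⇑σ) hlσk (σ p) (σ q)
      have hren := rename_dvd ⇑σ hGd
      rw [map_sub, map_sub, rename_X, rename_X] at hren
      rw [hσ, Equiv.swap_apply_self, Equiv.swap_apply_self, ← hσ] at hren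
      have hQdiff : (X p - X q : MvPolynomial (Fin n) ℤ) ∣
          (S lam l - rename ⇑σ (S lam (l ∘ ⇑σ)))
            - (S lam (l ∘ ⇑(Equiv.swap p q))
              - rename ⇑σ (S lam ((l ∘ ⇑(Equiv.swap p q)) ∘ ⇑σ))) := by
        have h1 := hG l hlk p q
        rw [hconj]
        have h2 := dvd_sub h1 hren
        convert h2 using 1
        ring
      rw [hR l hlk, hR (l ∘ ⇑(Equiv.swap p q)) hlswk] at hQdiff
      rw [show (X b - X a : MvPolynomial (Fin n) ℤ) * R l
          - (X b - X a) * R (l ∘ ⇑(Equiv.swap p q))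
          = (X b - X a) * (R l - R (l ∘ ⇑(Equiv.swap p q))) from by ring] at hQdiff
      have hnd : ¬ (X p - X q : MvPolynomial (Fin n) ℤ) ∣ (X b - X a) := by
        by_cases hap : p = a
        · subst hap
          have hqb : q ≠ b := fun hh => hcase (Or.inl ⟨rfl, hh⟩)
          exact not_dvd_X_sub_X b (Or.inl rfl) (Ne.symm hab') (Ne.symm hqb) (Ne.symm hab')
        · by_cases haq : q = a
          · subst haq
            have hpb : p ≠ b := fun hh => hcase (Or.inr ⟨hh, rfl⟩)
            exact not_dvd_X_sub_X b (Or.inl rfl) (Ne.symm hpb) (Ne.symm hab') (Ne.symm hab')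
          · exact not_dvd_X_sub_X a (Or.inr rfl) (Ne.symm hap) (Ne.symm haq) (Ne.symm hab')
      exact (hprime.2.2 _ _ hQdiff).resolve_left hnd
  have hic : invCount n μ + 1 = invCount n lam := invCount_swap_down hb lam ha hbf
  have hRhom : ∀ m, ones n m = k → (R m).IsHomogeneous (invCount n μ) := by
    intro m hmk
    by_cases hR0 : R m = 0
    · rw [hR0]; exact isHomogeneous_zero _ _ _
    · have hQhom : (S lam m - rename ⇑σ (S lam (m ∘ ⇑σ))).IsHomogeneous (invCount n lam) :=
        (hhom m).sub ((hhom (m ∘ ⇑σ)).rename_isHomogeneous)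
      have hfac := homog_factor (hR m hmk) hQhom
        ((isHomogeneous_X _ _).sub (isHomogeneous_X _ _)) hXne hR0
      have hd : invCount n lam - 1 = invCount n μ := by omega
      rw [← hd]
      exact hfac.2
  have hdomμlam : domLE n μ lam := domLE_swap_down lam hab ha hbf
  have hRsupp : SuppAbove n k R μ := by
    intro m hmk hR0
    have hQ0 : S lam m - rename ⇑σ (S lam (m ∘ ⇑σ)) ≠ 0 := by
      rw [hR m hmk]
      intro hh
      rcases mul_eq_zero.mp hh with hh | hh
      · exact hXne hh
      · exact hR0 hh
    by_cases hα : S lam m = 0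
    · have hβ : S lam (m ∘ ⇑σ) ≠ 0 := by
        intro hh
        apply hQ0
        rw [hα, hh, map_zero, sub_zero]
      have hmσk : ones n (m ∘ ⇑σ) = k := by rw [ones_comp_equiv]; exact hmk
      have hd := hsupp (m ∘ ⇑σ) hmσk hβ
      exact domLE_push hb lam m ha hbf hd
    · have hd := hsupp m hmk hα
      exact fun j => le_trans (hdomμlam j) (hd j)
  have hRval : R μ = invProd n μ := by
    have hμμσ : μ ∘ ⇑σ = lam := by
      funext x
      simp [hμ, hσ, Function.comp, Equiv.swap_apply_self]
    have hlamμ : lam ≠ μ := by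
      intro hh
      have := congrFun hh a
      rw [hμ] at this
      simp only [Function.comp_apply] at this
      rw [hσ, Equiv.swap_apply_left] at this
      rw [ha, hbf] at this
      exact absurd this (by simp)
    have hα0 : S lam μ = 0 := by
      by_contra hα
      have hd := hsupp μ hμk hα
      exact hlamμ (dom_antisymm hd hdomμlam)
    have hQμ := hR μ hμk
    rw [hα0, hμμσ, hval, zero_sub] at hQμ
    rw [hσ] at hQμ
    rw [rename_swap_invProd_down hb lam ha hbf] at hQμ
    rw [← hσ, ← hμ] at hQμ
    apply mul_left_cancel₀ hXne
    rw [← hQμ]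
    ring
  intro m hmk
  rw [hR m hmk]
  congr 1
  exact uniq k μ hμk R (S μ) hRG hGμ hRhom (fun m _ => hhomμ m) hRsupp hsuppμ
    (by rw [hRval, hvalμ]) m hmk

end MainArg

/-- divided difference operators act on Schubert classes by:
if `λᵢ > λ_{i+1}` then `∂ᵢ S̃_λ = S̃_{sᵢ·λ}` (i.e.
`S̃_λ - sᵢ·S̃_λ = (y_{i+1} - yᵢ)·S̃_{sᵢ·λ}`); if `λᵢ ≤ λ_{i+1}` then
`∂ᵢ S̃_λ = 0` (i.e. `S̃_λ = sᵢ·S̃_λ`). -/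
theorem stmt14 (n k : ℕ) (hk : k ≤ n)
    (S : (Fin n → Bool) → (Fin n → Bool) → MvPolynomial (Fin n) ℤ)
    (hS : IsSchubertFamily n k S)
    (i : ℕ) (h : i + 1 < n) (lam : Fin n → Bool) (hlam : ones n lam = k) :
    (lam ⟨i, by omega⟩ = true → lam ⟨i + 1, h⟩ = false →
      ∀ m, ones n m = k →
        S lam m - sAct n i h (S lam) m =
          (X ⟨i + 1, h⟩ - X ⟨i, by omega⟩ : MvPolynomial (Fin n) ℤ) *
            S (lam ∘ ⇑(Equiv.swap (⟨i, by omega⟩ : Fin n) ⟨i + 1, h⟩)) m) ∧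
    ((lam ⟨i, by omega⟩ = false ∨ lam ⟨i + 1, h⟩ = true) →
      ∀ m, ones n m = k → S lam m = sAct n i h (S lam) m) := by
  constructor
  · intro ha hbf m hmk
    have hca := caseA k i h S hS lam hlam ha hbf m hmk
    rw [show sAct n i h (S lam) m
      = rename ⇑(Equiv.swap (⟨i, by omega⟩ : Fin n) ⟨i + 1, h⟩)
          (S lam (m ∘ ⇑(Equiv.swap (⟨i, by omega⟩ : Fin n) ⟨i + 1, h⟩))) from rfl]
    exact hca
  · intro hcase m hmk
    set a : Fin n := ⟨i, by omega⟩ with hadef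
    set b : Fin n := ⟨i + 1, h⟩ with hbdef
    have hb : (b : ℕ) = (a : ℕ) + 1 := rfl
    have hab : a < b := by rw [Fin.lt_def, hadef, hbdef]; omega
    have hab' : a ≠ b := ne_of_lt hab
    set σ := Equiv.swap a b with hσ
    have hgoal : S lam m = rename ⇑σ (S lam (m ∘ ⇑σ)) := by
      by_cases heq : lam a = lam b
      · -- B1 : lam is fixed by the swap; use uniqueness
        obtain ⟨hG, hsupp, hval, hhom⟩ := hS lam hlam
        have hfix : lam ∘ ⇑σ = lam := by
          funext t
          simp only [Function.comp_apply]
          rw [hσ]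
          rcases eq_or_ne t a with rfl | hta
          · rw [Equiv.swap_apply_left, heq]
          rcases eq_or_ne t b with rfl | htb
          · rw [Equiv.swap_apply_right, heq]
          · rw [Equiv.swap_apply_of_ne_of_ne hta htb]
        have hGβ : IsGKM n k (fun m => rename ⇑σ (S lam (m ∘ ⇑σ))) := by
          intro l hlk p q
          have hlσk : ones n (l ∘ ⇑σ) = k := by rw [ones_comp_equiv]; exact hlk
          have hconj := comp_swap_conj l a b p q
          rw [← hσ] at hconj
          have hGd := hG (l ∘ ⇑σ) hlσk (σ p) (σ q)
          have hren := rename_dvd ⇑σ hGd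
          rw [map_sub, map_sub, rename_X, rename_X] at hren
          rw [hσ, Equiv.swap_apply_self, Equiv.swap_apply_self, ← hσ] at hren
          show (X p - X q : MvPolynomial (Fin n) ℤ) ∣
            rename ⇑σ (S lam (l ∘ ⇑σ))
              - rename ⇑σ (S lam ((l ∘ ⇑(Equiv.swap p q)) ∘ ⇑σ))
          rw [hconj]
          exact hren
        have hhomβ : ∀ m', ones n m' = k →
            ((fun m' => rename ⇑σ (S lam (m' ∘ ⇑σ))) m').IsHomogeneous (invCount n lam) :=
          fun m' _ => (hhom (m' ∘ ⇑σ)).rename_isHomogeneous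
        have hsβ : SuppAbove n k (fun m' => rename ⇑σ (S lam (m' ∘ ⇑σ))) lam := by
          intro m' hm'k hne
          have hS0 : S lam (m' ∘ ⇑σ) ≠ 0 := by
            intro hh
            apply hne
            simp only []
            rw [hh, map_zero]
          have hm'σk : ones n (m' ∘ ⇑σ) = k := by rw [ones_comp_equiv]; exact hm'k
          have hd := hsupp (m' ∘ ⇑σ) hm'σk hS0
          exact domLE_pull hb lam m' hcase hd
        have hvβ : S lam lam = rename ⇑σ (S lam (lam ∘ ⇑σ)) := by
          rw [hfix, hval, hσ, rename_swap_invProd_fix hb lam heq]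
        exact uniq k lam hlam (S lam) (fun m' => rename ⇑σ (S lam (m' ∘ ⇑σ)))
          hG hGβ (fun m' _ => hhom m') hhomβ hsupp hsβ hvβ m hmk
      · -- B2 : lam a = false, lam b = true
        have haf : lam a = false := by
          cases hla : lam a
          · rfl
          · exfalso
            rcases hcase with hc | hc
            · rw [hla] at hc; exact absurd hc (by simp)
            · exact heq (hla.trans hc.symm)
        have hbt : lam b = true := by
          cases hlb : lam b
          · exfalso
            rcases hcase with hc | hc
            · exact heq (haf.trans hlb.symm)
            · rw [hlb] at hc; exact absurd hc (by simp)
          · rfl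
        set μ' := lam ∘ ⇑σ with hμ'
        have hμ'k : ones n μ' = k := by rw [hμ', ones_comp_equiv]; exact hlam
        have hμ'a : μ' a = true := by
          rw [hμ']; simp only [Function.comp_apply]; rw [hσ, Equiv.swap_apply_left]; exact hbt
        have hμ'b : μ' b = false := by
          rw [hμ']; simp only [Function.comp_apply]; rw [hσ, Equiv.swap_apply_right]; exact haf
        have hμ'σ : μ' ∘ ⇑σ = lam := by
          funext x
          rw [hμ', hσ]
          simp [Function.comp, Equiv.swap_apply_self]
        have hmσk : ones n (m ∘ ⇑σ) = k := by rw [ones_comp_equiv]; exact hmk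
        have hA := caseA k i h S hS μ' hμ'k hμ'a hμ'b
        have h1 := hA m hmk
        have h2 := hA (m ∘ ⇑σ) hmσk
        rw [← hσ] at h1 h2
        rw [hμ'σ] at h1 h2
        have hanti := anti_swap a b (S μ') m
        rw [← hσ] at hanti
        rw [h1, h2] at hanti
        rw [map_mul, map_sub, rename_X, rename_X] at hanti
        rw [hσ, Equiv.swap_apply_left, Equiv.swap_apply_right, ← hσ] at hanti
        have hXne' : (X a - X b : MvPolynomial (Fin n) ℤ) ≠ 0 := X_sub_X_ne_zero hab'
        apply mul_left_cancel₀ hXne'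
        rw [hanti]
        ring
    rw [show sAct n i h (S lam) m = rename ⇑σ (S lam (m ∘ ⇑σ)) from rfl]
    exact hgoal
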